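/- Fix k ≥ 1 and let p_1 < p_2 < ... denote the primes in increasing order. Define H(n) = ∑_{m=1}^{n} 1/m and H_k(n) = ∑_{m=1, gcd(m, p_1·p_2·...·p_k)=1}^{n} 1/m (the harmonic sum restricted to integers coprime to the first k primes). Then H_k(n)/H(n) converges, as n → ∞, to ∏_{i=1}^{k} (1 - 1/p_i). -/

import Mathlib

open Finset Filter

/-- `nthPrime k` is the `k`-th prime, indexed from 1 (`nthPrime 1 = 2`, ...). -/
noncomputable def nthPrime (k : ℕ) : ℕ := Nat.nth Nat.Prime (k - 1)

open Classical in
noncomputable def Hs (n : ℕ) : ℝ := ∑ m ∈ Finset.Icc 1 n, (1 : ℝ) / m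

open Classical in
noncomputable def fS (Q n : ℕ) : ℝ :=
  ∑ m ∈ (Finset.Icc 1 n).filter (fun m => Nat.Coprime m Q), (1 : ℝ) / m

lemma Hs_eq (n : ℕ) : Hs n = ∑ i ∈ Finset.range n, 1 / ((i : ℝ) + 1) := by
  unfold Hs
  rw [← Finset.Ico_add_one_right_eq_Icc, Finset.sum_Ico_eq_sum_range]
  refine Finset.sum_congr (by norm_num) fun i _ => ?_
  push_cast
  ring_nf

lemma Hs_tendsto : Tendsto Hs atTop atTop := by
  have : Hs = fun n => ∑ i ∈ Finset.range n, 1 / ((i : ℝ) + 1) := funext Hs_eq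
  rw [this]
  exact Real.tendsto_sum_range_one_div_nat_succ_atTop

lemma Hs_mono : Monotone Hs := by
  intro a b hab
  unfold Hs
  refine Finset.sum_le_sum_of_subset_of_nonneg (Finset.Icc_subset_Icc_right hab) ?_
  intro m _ _
  positivity

lemma Hs_diff_le (p n : ℕ) (hp : 0 < p) : Hs n - Hs (n / p) ≤ p := by
  have hle : n / p ≤ n := Nat.div_le_self n p
  have hsplit : Hs (n / p) + ∑ m ∈ Finset.Ioc (n / p) n, (1 : ℝ) / m = Hs n := by
    unfold Hs
    rw [show ∀ a : ℕ, Finset.Icc 1 a = Finset.Ioc 0 a from fun a => Finset.Icc_add_one_left_eq_Ioc 0 a]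
    exact Finset.sum_Ioc_consecutive _ (Nat.zero_le _) hle
  have hcard : ∑ m ∈ Finset.Ioc (n / p) n, (1 : ℝ) / m
      ≤ ((n - n / p : ℕ) : ℝ) * (1 / ((n / p : ℕ) + 1 : ℝ)) := by
    have hb := Finset.sum_le_card_nsmul (Finset.Ioc (n / p) n) (fun m => (1 : ℝ) / m)
      (1 / ((n / p : ℕ) + 1 : ℝ)) ?_
    · simpa [Nat.card_Ioc, nsmul_eq_mul] using hb
    · intro m hm
      simp only [Finset.mem_Ioc] at hm
      have h1 : ((n / p : ℕ) : ℝ) + 1 ≤ m := by exact_mod_cast Nat.succ_le_of_lt hm.1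
      have h2 : (0 : ℝ) < ((n / p : ℕ) : ℝ) + 1 := by positivity
      exact one_div_le_one_div_of_le h2 h1
  have hnat : n < (n / p + 1) * p := (Nat.div_lt_iff_lt_mul hp).mp (Nat.lt_succ_self _)
  have hnR : (n : ℝ) < (((n / p : ℕ) : ℝ) + 1) * p := by exact_mod_cast hnat
  have hfin : ((n - n / p : ℕ) : ℝ) * (1 / ((n / p : ℕ) + 1 : ℝ)) ≤ p := by
    have hcast : ((n - n / p : ℕ) : ℝ) = (n : ℝ) - ((n / p : ℕ) : ℝ) :=
      Nat.cast_sub hle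
    rw [hcast, mul_one_div, div_le_iff₀ (by positivity)]
    have h0 : (0 : ℝ) ≤ ((n / p : ℕ) : ℝ) := by positivity
    nlinarith
  linarith [hsplit, hcard, hfin]

open Classical in
lemma fS_mul (p Q n : ℕ) (hp : p.Prime) (hpQ : Nat.Coprime p Q) :
    fS (p * Q) n = fS Q n - (1 / (p : ℝ)) * fS Q (n / p) := by
  classical
  set A := (Finset.Icc 1 n).filter (fun m => Nat.Coprime m Q) with hA
  have hsplit := Finset.sum_filter_add_sum_filter_not A (fun m => p ∣ m) (fun m => (1 : ℝ) / m)
  have hfilt : A.filter (fun m => ¬ p ∣ m)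
      = (Finset.Icc 1 n).filter (fun m => Nat.Coprime m (p * Q)) := by
    rw [hA, Finset.filter_filter]
    refine Finset.filter_congr fun m _ => ?_
    rw [Nat.coprime_mul_iff_right]
    constructor
    · rintro ⟨hQ, hpm⟩
      exact ⟨Nat.coprime_comm.mp (hp.coprime_iff_not_dvd.mpr hpm), hQ⟩
    · rintro ⟨hpm, hQ⟩
      exact ⟨hQ, hp.coprime_iff_not_dvd.mp (Nat.coprime_comm.mp hpm)⟩
  have hdvd : ∑ m ∈ A.filter (fun m => p ∣ m), (1 : ℝ) / m
      = (1 / (p : ℝ)) * fS Q (n / p) := by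
    rw [fS, Finset.mul_sum]
    refine Finset.sum_nbij' (fun m => m / p) (fun m' => p * m') ?_ ?_ ?_ ?_ ?_
    · intro m hm
      simp only [hA, Finset.mem_filter, Finset.mem_Icc] at hm ⊢
      obtain ⟨⟨⟨h1, h2⟩, hcop⟩, hpm⟩ := hm
      refine ⟨⟨?_, Nat.div_le_div_right h2⟩, ?_⟩
      · exact Nat.one_le_div_iff hp.pos |>.mpr (Nat.le_of_dvd h1 hpm)
      · exact Nat.Coprime.coprime_dvd_left ⟨p, (Nat.div_mul_cancel hpm).symm⟩ hcop
    · intro m' hm'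
      simp only [hA, Finset.mem_filter, Finset.mem_Icc] at hm' ⊢
      obtain ⟨⟨h1, h2⟩, hcop⟩ := hm'
      refine ⟨⟨⟨Nat.one_le_iff_ne_zero.mpr (Nat.mul_ne_zero hp.ne_zero (by omega)), ?_⟩, hpQ.mul hcop⟩, ⟨m', rfl⟩⟩
      calc p * m' ≤ p * (n / p) := Nat.mul_le_mul_left p h2
        _ ≤ n := by rw [mul_comm]; exact Nat.div_mul_le_self n p
    · intro m hm
      simp only [hA, Finset.mem_filter] at hm
      exact Nat.mul_div_cancel' hm.2
    · intro m' _
      exact Nat.mul_div_cancel_left m' hp.pos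
    · intro m hm
      simp only [hA, Finset.mem_filter] at hm
      have hpm := hm.2
      have : (m : ℝ) = (p : ℝ) * ((m / p : ℕ) : ℝ) := by
        exact_mod_cast (Nat.mul_div_cancel' hpm).symm
      show (1 : ℝ) / m = 1 / (p : ℝ) * (1 / ((m / p : ℕ) : ℝ))
      rw [this, one_div_mul_one_div]
  rw [fS, ← hfilt]
  have : fS Q n = ∑ m ∈ A, (1 : ℝ) / m := rfl
  rw [this, ← hsplit, hdvd]
  ring

open Classical in
lemma key (s : Finset ℕ) (hs : ∀ q ∈ s, Nat.Prime q) :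
    ∃ C : ℝ, 0 ≤ C ∧
      ∀ n, |fS (∏ q ∈ s, q) n - (∏ q ∈ s, (1 - 1 / (q : ℝ))) * Hs n| ≤ C := by
  classical
  induction s using Finset.induction_on with
  | empty =>
    refine ⟨0, le_refl 0, fun n => ?_⟩
    simp [fS, Hs, Nat.coprime_one_right]
  | @insert p s hp ih =>
    obtain ⟨C, hC0, hC⟩ := ih fun q hq => hs q (Finset.mem_insert_of_mem hq)
    have hp' : p.Prime := hs p (Finset.mem_insert_self p s)
    set Q := ∏ q ∈ s, q with hQ
    set c := ∏ q ∈ s, (1 - 1 / (q : ℝ)) with hc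
    have hpQ : Nat.Coprime p Q := by
      refine Nat.Coprime.prod_right fun q hq => ?_
      exact (Nat.coprime_primes hp' (hs q (Finset.mem_insert_of_mem hq))).mpr
        (fun h => hp (h ▸ hq))
    have hc0 : 0 ≤ c := by
      refine Finset.prod_nonneg fun q hq => ?_
      have h2 : (2 : ℝ) ≤ q := by
        exact_mod_cast (hs q (Finset.mem_insert_of_mem hq)).two_le
      have : 1 / (q : ℝ) ≤ 1 / 1 := one_div_le_one_div_of_le one_pos (by linarith)
      linarith
    have hpR : (1 : ℝ) ≤ p := by exact_mod_cast hp'.pos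
    refine ⟨C + C + c, by positivity, fun n => ?_⟩
    rw [Finset.prod_insert hp, Finset.prod_insert hp, ← hQ, ← hc,
      fS_mul p Q n hp' hpQ]
    have e1 := hC n
    have e2 := hC (n / p)
    have e3 : 0 ≤ Hs n - Hs (n / p) := sub_nonneg.mpr (Hs_mono (Nat.div_le_self n p))
    have e4 : Hs n - Hs (n / p) ≤ p := Hs_diff_le p n hp'.pos
    set a := fS Q n - c * Hs n with ha
    set b := fS Q (n / p) - c * Hs (n / p) with hb
    set d := Hs n - Hs (n / p) with hd
    have hrw : fS Q n - 1 / (p : ℝ) * fS Q (n / p) - (1 - 1 / (p : ℝ)) * c * Hs n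
        = a - (1 / (p : ℝ)) * b + (c / (p : ℝ)) * d := by
      rw [ha, hb, hd]
      field_simp
      ring
    rw [hrw]
    have hpinv : 0 < 1 / (p : ℝ) := by positivity
    have hpinv1 : 1 / (p : ℝ) ≤ 1 := by
      rw [div_le_one (by linarith)]; linarith
    rw [abs_le] at e1 e2 ⊢
    have hcd : (c / (p : ℝ)) * d ≤ c := by
      calc (c / (p : ℝ)) * d ≤ (c / (p : ℝ)) * p := by
            apply mul_le_mul_of_nonneg_left e4 (by positivity)
        _ = c := by field_simp
    have hcd0 : 0 ≤ (c / (p : ℝ)) * d := by positivity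
    constructor
    · nlinarith [e1.1, e2.2, mul_le_mul_of_nonneg_left e2.2 hpinv.le,
        mul_le_mul_of_nonneg_right hpinv1 hC0]
    · nlinarith [e1.2, e2.1, mul_le_mul_of_nonneg_left e2.1 hpinv.le,
        mul_le_mul_of_nonneg_right hpinv1 hC0]

lemma ratio_tendsto (g h : ℕ → ℝ) (c C : ℝ) (hb : ∀ n, |g n - c * h n| ≤ C)
    (hh : Tendsto h atTop atTop) : Tendsto (fun n => g n / h n) atTop (nhds c) := by
  have h0 : ∀ᶠ n in atTop, 0 < h n := hh.eventually_gt_atTop 0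
  have hz : Tendsto (fun n => (g n - c * h n) / h n) atTop (nhds 0) := by
    apply squeeze_zero_norm' ?_ (hh.const_div_atTop C)
    filter_upwards [h0] with n hn
    rw [Real.norm_eq_abs, abs_div, abs_of_pos hn]
    exact div_le_div_of_nonneg_right (hb n) hn.le
  have hadd := hz.add (tendsto_const_nhds (x := c) (f := atTop))
  rw [zero_add] at hadd
  refine hadd.congr' ?_
  filter_upwards [h0] with n hn
  field_simp
  ring

open Classical in
/-- The ratio of the harmonic sum restricted to integers coprime to the first `k` primes to the
full harmonic sum converges to `∏_{i=1}^{k} (1 - 1/p_i)`. -/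
theorem sifted_harmonic_ratio_tendsto (k : ℕ) (hk : 1 ≤ k) :
    Tendsto (fun n : ℕ =>
        (∑ m ∈ (Finset.Icc 1 n).filter
            (fun m => Nat.Coprime m (∏ i ∈ Finset.Icc 1 k, nthPrime i)), (1 : ℝ) / m) /
          (∑ m ∈ Finset.Icc 1 n, (1 : ℝ) / m)) atTop
      (nhds (∏ i ∈ Finset.Icc 1 k, (1 - 1 / (nthPrime i : ℝ)))) := by
  classical
  set s := (Finset.Icc 1 k).image nthPrime with hsdef
  have hinj : ∀ x ∈ Finset.Icc 1 k, ∀ y ∈ Finset.Icc 1 k,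
      nthPrime x = nthPrime y → x = y := by
    intro x hx y hy hxy
    simp only [Finset.mem_Icc] at hx hy
    have := Nat.nth_injective Nat.infinite_setOf_prime hxy
    omega
  have hprodQ : ∏ q ∈ s, q = ∏ i ∈ Finset.Icc 1 k, nthPrime i :=
    Finset.prod_image hinj
  have hprodc : ∏ q ∈ s, (1 - 1 / (q : ℝ)) =
      ∏ i ∈ Finset.Icc 1 k, (1 - 1 / (nthPrime i : ℝ)) :=
    Finset.prod_image hinj
  have hsprime : ∀ q ∈ s, Nat.Prime q := by
    intro q hq
    simp only [hsdef, Finset.mem_image] at hq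
    obtain ⟨i, _, rfl⟩ := hq
    exact Nat.prime_nth_prime _
  obtain ⟨C, _, hC⟩ := key s hsprime
  rw [hprodQ, hprodc] at hC
  rw [← hprodc] at hC ⊢
  exact ratio_tendsto (fun n => fS (∏ i ∈ Finset.Icc 1 k, nthPrime i) n) Hs
    (∏ q ∈ s, (1 - 1 / (q : ℝ))) C hC Hs_tendsto
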